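/- For any convex body K in ℝⁿ and any unit vectors u ≠ ±v, |w_K(u) − w_K(v)| ≤ M_K · ρ(u,v), where M_K = √(δ_K² − ω_K²), δ_K is the diameter of K and ω_K its thickness. -/

import Mathlib

open scoped RealInnerProductSpace
open Metric Filter

/-- Width of `K` in direction `u`: distance between the two supporting
hyperplanes of `K` orthogonal to the unit vector `u`. -/
noncomputable def widthFn {n : ℕ} (K : Set (EuclideanSpace ℝ (Fin n)))
    (u : EuclideanSpace ℝ (Fin n)) : ℝ :=
  sSup ((fun x => ⟪x, u⟫) '' K) - sInf ((fun x => ⟪x, u⟫) '' K)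

/-- Diameter of `K` in direction `u`: maximal length of a chord of `K` parallel to `u`. -/
noncomputable def dirDiam {n : ℕ} (K : Set (EuclideanSpace ℝ (Fin n)))
    (u : EuclideanSpace ℝ (Fin n)) : ℝ :=
  sSup {d : ℝ | ∃ x ∈ K, ∃ y ∈ K, (∃ t : ℝ, x - y = t • u) ∧ d = dist x y}

/-- Projective spherical distance `ρ(u,v) = arccos |⟨u,v⟩|`. -/
noncomputable def rho {n : ℕ} (u v : EuclideanSpace ℝ (Fin n)) : ℝ :=
  Real.arccos |⟪u, v⟫|

/-- `e_K(O)`: maximal length of a chord of `K` cut by a line through `O`. -/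
noncomputable def eFn {n : ℕ} (K : Set (EuclideanSpace ℝ (Fin n)))
    (O : EuclideanSpace ℝ (Fin n)) : ℝ :=
  sSup {d : ℝ | ∃ x ∈ K, ∃ y ∈ K, Collinear ℝ ({O, x, y} : Set (EuclideanSpace ℝ (Fin n))) ∧
    d = dist x y}

/-- `s_K(u)`: maximal distance between a point of `K` in one supporting hyperplane
orthogonal to `u` and a point of `K` in the other. -/
noncomputable def sFn {n : ℕ} (K : Set (EuclideanSpace ℝ (Fin n)))
    (u : EuclideanSpace ℝ (Fin n)) : ℝ :=
  sSup {d : ℝ | ∃ A ∈ K, ∃ B ∈ K,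
    (∀ x ∈ K, ⟪x, u⟫ ≤ ⟪A, u⟫) ∧ (∀ x ∈ K, ⟪B, u⟫ ≤ ⟪x, u⟫) ∧ d = dist A B}

/-- `r_K(u)`: infimum over diametral chords `[AB]` for `u` and pairs of parallel
supporting hyperplanes `H₁ ∋ A`, `H₂ ∋ B` of the distance between `H₁` and `H₂`. -/
noncomputable def rFn {n : ℕ} (K : Set (EuclideanSpace ℝ (Fin n)))
    (u : EuclideanSpace ℝ (Fin n)) : ℝ :=
  sInf {d : ℝ | ∃ A ∈ K, ∃ B ∈ K, (∃ t : ℝ, A - B = t • u) ∧ dist A B = dirDiam K u ∧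
    ∃ v : EuclideanSpace ℝ (Fin n), ‖v‖ = 1 ∧
      (∀ x ∈ K, ⟪x, v⟫ ≤ ⟪A, v⟫) ∧ (∀ x ∈ K, ⟪B, v⟫ ≤ ⟪x, v⟫) ∧ d = ⟪A - B, v⟫}

open Real in
private lemma realKey (d δ ω θ ρ b : ℝ) (hd : 0 < d) (hdδ : d ≤ δ) (hω0 : 0 ≤ ω)
    (hωb : ω ≤ b) (hbW : b ≤ d * Real.cos θ) (hbc : d * Real.cos (θ + ρ) ≤ b)
    (hθ0 : 0 ≤ θ) (hθ2 : θ ≤ π / 2) (hρ0 : 0 ≤ ρ) :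
    d * Real.cos θ - b ≤ Real.sqrt (δ ^ 2 - ω ^ 2) * ρ := by
  have hb0 : 0 ≤ b := le_trans hω0 hωb
  have hcos1 : Real.cos θ ≤ 1 := Real.cos_le_one θ
  have hbd1 : b / d ≤ 1 := by
    rw [div_le_one hd]; nlinarith
  have hbd0 : 0 ≤ b / d := div_nonneg hb0 hd.le
  set ψ := Real.arccos (b / d) with hψdef
  have hcψ : Real.cos ψ = b / d := Real.cos_arccos (by linarith) hbd1
  have hψ0 : 0 ≤ ψ := Real.arccos_nonneg _
  have hψ2 : ψ ≤ π / 2 := Real.arccos_le_pi_div_two.2 hbd0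
  have hpi : 0 < π := Real.pi_pos
  have hcθψ : Real.cos ψ ≤ Real.cos θ := by
    rw [hcψ, div_le_iff₀ hd]; nlinarith
  have hθψ : θ ≤ ψ := by
    by_contra h; push_neg at h
    have := Real.strictAntiOn_cos ⟨hψ0, by linarith⟩ ⟨hθ0, by linarith⟩ h
    linarith
  have hψθρ : ψ ≤ θ + ρ := by
    rcases le_or_gt (θ + ρ) π with hle | hlt
    · by_contra h; push_neg at h
      have hc2 : Real.cos (θ + ρ) ≤ Real.cos ψ := by
        rw [hcψ, le_div_iff₀ hd]; nlinarith
      have := Real.strictAntiOn_cos ⟨by positivity, hle⟩ ⟨hψ0, by linarith⟩ h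
      linarith
    · linarith
  have hsplit : Real.cos θ - Real.cos ψ
      = 2 * Real.sin ((ψ + θ) / 2) * Real.sin ((ψ - θ) / 2) := by
    rw [Real.cos_sub_cos]
    have h1 : (θ - ψ) / 2 = -((ψ - θ) / 2) := by ring
    rw [h1, Real.sin_neg]
    ring_nf
  have hs2 : Real.sin ((ψ - θ) / 2) ≤ (ψ - θ) / 2 := Real.sin_le (by linarith)
  have hs2n : 0 ≤ Real.sin ((ψ - θ) / 2) :=
    Real.sin_nonneg_of_nonneg_of_le_pi (by linarith) (by linarith)
  have hs1n : 0 ≤ Real.sin ((ψ + θ) / 2) :=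
    Real.sin_nonneg_of_nonneg_of_le_pi (by linarith) (by linarith)
  have hsψn : 0 ≤ Real.sin ψ := Real.sin_nonneg_of_nonneg_of_le_pi hψ0 (by linarith)
  have hs1 : Real.sin ((ψ + θ) / 2) ≤ Real.sin ψ := by
    rcases eq_or_lt_of_le (show (ψ + θ) / 2 ≤ ψ by linarith) with h | h
    · rw [h]
    · exact (Real.strictMonoOn_sin ⟨by linarith, by linarith⟩ ⟨by linarith, hψ2⟩ h).le
  have hsψ : Real.sin ψ = Real.sqrt (1 - (b / d) ^ 2) := Real.sin_arccos _
  have hdsψ : d * Real.sin ψ = Real.sqrt (d ^ 2 - b ^ 2) := by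
    rw [hsψ, ← Real.sqrt_sq hd.le, ← Real.sqrt_mul (by positivity)]
    congr 1; field_simp; rw [Real.sq_sqrt (sq_nonneg d)]
  have hsqle : Real.sqrt (d ^ 2 - b ^ 2) ≤ Real.sqrt (δ ^ 2 - ω ^ 2) := by
    apply Real.sqrt_le_sqrt; nlinarith
  have h1 : d * Real.cos θ - b = d * (Real.cos θ - Real.cos ψ) := by
    rw [hcψ]; field_simp
  rw [h1, hsplit]
  have key : d * (2 * Real.sin ((ψ + θ) / 2) * Real.sin ((ψ - θ) / 2))
      ≤ d * Real.sin ψ * (ψ - θ) := by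
    have h2 : 2 * Real.sin ((ψ + θ) / 2) * Real.sin ((ψ - θ) / 2)
        ≤ 2 * Real.sin ψ * ((ψ - θ) / 2) := by
      apply mul_le_mul (by linarith) hs2 hs2n (by linarith)
    nlinarith
  have h3 : d * Real.sin ψ * (ψ - θ) ≤ Real.sqrt (δ ^ 2 - ω ^ 2) * ρ := by
    rw [hdsψ]
    exact mul_le_mul hsqle (by linarith) (by linarith) (Real.sqrt_nonneg _)
  linarith

private lemma widthSubLe {n : ℕ} (K : Set (EuclideanSpace ℝ (Fin n)))
    (hKc : IsCompact K) (hKint : (interior K).Nonempty)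
    (u v : EuclideanSpace ℝ (Fin n)) (hu : ‖u‖ = 1) (hv : ‖v‖ = 1) :
    widthFn K u - widthFn K v ≤
      Real.sqrt ((Metric.diam K) ^ 2 -
        (⨅ w : sphere (0 : EuclideanSpace ℝ (Fin n)) 1, widthFn K w) ^ 2) * rho u v := by
  have hne : K.Nonempty := hKint.mono interior_subset
  have cont : ∀ w : EuclideanSpace ℝ (Fin n),
      Continuous fun x : EuclideanSpace ℝ (Fin n) => (⟪x, w⟫ : ℝ) :=
    fun w => continuous_id.inner continuous_const
  have hbdd : ∀ w : EuclideanSpace ℝ (Fin n),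
      BddAbove ((fun x => (⟪x, w⟫ : ℝ)) '' K) :=
    fun w => (hKc.image (cont w)).bddAbove
  have hbddb : ∀ w : EuclideanSpace ℝ (Fin n),
      BddBelow ((fun x => (⟪x, w⟫ : ℝ)) '' K) :=
    fun w => (hKc.image (cont w)).bddBelow
  have wnn : ∀ w : EuclideanSpace ℝ (Fin n), 0 ≤ widthFn K w := by
    intro w
    obtain ⟨x₀, hx₀⟩ := hne
    have h1 : sInf ((fun x => (⟪x, w⟫ : ℝ)) '' K) ≤ ⟪x₀, w⟫ :=
      csInf_le (hbddb w) ⟨x₀, hx₀, rfl⟩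
    have h2 : (⟪x₀, w⟫ : ℝ) ≤ sSup ((fun x => (⟪x, w⟫ : ℝ)) '' K) :=
      le_csSup (hbdd w) ⟨x₀, hx₀, rfl⟩
    unfold widthFn; linarith
  set ω := ⨅ w : sphere (0 : EuclideanSpace ℝ (Fin n)) 1, widthFn K (w : EuclideanSpace ℝ (Fin n)) with hωdef
  have hbr : BddBelow (Set.range fun w : sphere (0 : EuclideanSpace ℝ (Fin n)) 1 =>
      widthFn K (w : EuclideanSpace ℝ (Fin n))) := by
    refine ⟨0, ?_⟩; rintro _ ⟨w, rfl⟩; exact wnn w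
  have hωle : ∀ (w : EuclideanSpace ℝ (Fin n)), ‖w‖ = 1 → ω ≤ widthFn K w :=
    fun w hw => ciInf_le hbr ⟨w, mem_sphere_zero_iff_norm.2 hw⟩
  haveI : Nonempty (sphere (0 : EuclideanSpace ℝ (Fin n)) 1) :=
    ⟨⟨u, mem_sphere_zero_iff_norm.2 hu⟩⟩
  have hω0 : 0 ≤ ω := le_ciInf fun w => wnn w
  have hrho0 : 0 ≤ rho u v := Real.arccos_nonneg _
  have hM0 : 0 ≤ Real.sqrt ((Metric.diam K) ^ 2 - ω ^ 2) := Real.sqrt_nonneg _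
  rcases le_or_gt (widthFn K u) (widthFn K v) with hle | hlt
  · have := mul_nonneg hM0 hrho0; linarith
  obtain ⟨A, hA, hAmax⟩ := hKc.exists_isMaxOn hne (cont u).continuousOn
  obtain ⟨B, hB, hBmin⟩ := hKc.exists_isMinOn hne (cont u).continuousOn
  have hAmax' : ∀ x ∈ K, (⟪x, u⟫ : ℝ) ≤ ⟪A, u⟫ := fun x hx => hAmax hx
  have hBmin' : ∀ x ∈ K, (⟪B, u⟫ : ℝ) ≤ ⟪x, u⟫ := fun x hx => hBmin hx
  have hsup : sSup ((fun x => (⟪x, u⟫ : ℝ)) '' K) = ⟪A, u⟫ :=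
    IsGreatest.csSup_eq ⟨⟨A, hA, rfl⟩, by rintro _ ⟨x, hx, rfl⟩; exact hAmax' x hx⟩
  have hinf : sInf ((fun x => (⟪x, u⟫ : ℝ)) '' K) = ⟪B, u⟫ :=
    IsLeast.csInf_eq ⟨⟨B, hB, rfl⟩, by rintro _ ⟨x, hx, rfl⟩; exact hBmin' x hx⟩
  have hWu : widthFn K u = ⟪A - B, u⟫ := by
    rw [widthFn, hsup, hinf, inner_sub_left]
  set c := A - B with hc
  have hW : (0 : ℝ) < ⟪c, u⟫ := by rw [← hWu]; linarith [wnn v]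
  have hcne : c ≠ 0 := by
    intro h; rw [h, inner_zero_left] at hW; exact lt_irrefl _ hW
  have hd : 0 < ‖c‖ := norm_pos_iff.2 hcne
  have hWd : (⟪c, u⟫ : ℝ) ≤ ‖c‖ := by
    have := real_inner_le_norm c u; rwa [hu, mul_one] at this
  have hδ : ‖c‖ ≤ Metric.diam K := by
    have := dist_le_diam_of_mem hKc.isBounded hA hB
    rwa [dist_eq_norm] at this
  have hvb : |(⟪c, v⟫ : ℝ)| ≤ widthFn K v := by
    have h1 : (⟪A, v⟫ : ℝ) ≤ sSup ((fun x => (⟪x, v⟫ : ℝ)) '' K) :=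
      le_csSup (hbdd v) ⟨A, hA, rfl⟩
    have h2 : sInf ((fun x => (⟪x, v⟫ : ℝ)) '' K) ≤ ⟪B, v⟫ :=
      csInf_le (hbddb v) ⟨B, hB, rfl⟩
    have h3 : (⟪B, v⟫ : ℝ) ≤ sSup ((fun x => (⟪x, v⟫ : ℝ)) '' K) :=
      le_csSup (hbdd v) ⟨B, hB, rfl⟩
    have h4 : sInf ((fun x => (⟪x, v⟫ : ℝ)) '' K) ≤ ⟪A, v⟫ :=
      csInf_le (hbddb v) ⟨A, hA, rfl⟩
    have e : (⟪c, v⟫ : ℝ) = ⟪A, v⟫ - ⟪B, v⟫ := by rw [hc, inner_sub_left]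
    rw [abs_le]
    constructor <;> (rw [e]; unfold widthFn) <;> linarith
  -- projection inequality
  have huu : (⟪u, u⟫ : ℝ) = 1 := by
    rw [real_inner_self_eq_norm_sq, hu]; norm_num
  set q := c - (⟪c, u⟫ : ℝ) • u with hq
  set p := v - (⟪v, u⟫ : ℝ) • u with hp
  have hdecomp : (⟪c, v⟫ : ℝ) = ⟪c, u⟫ * ⟪u, v⟫ + ⟪q, p⟫ := by
    simp only [hq, hp, inner_sub_left, inner_sub_right, real_inner_smul_left,
      real_inner_smul_right, huu]
    rw [real_inner_comm v u]
    ring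
  have hq2 : ‖q‖ ^ 2 = ‖c‖ ^ 2 - ⟪c, u⟫ ^ 2 := by
    rw [← real_inner_self_eq_norm_sq, ← real_inner_self_eq_norm_sq]
    simp only [hq, inner_sub_left, inner_sub_right, real_inner_smul_left,
      real_inner_smul_right, huu]
    rw [real_inner_comm u c]
    ring
  have hp2 : ‖p‖ ^ 2 = 1 - ⟪u, v⟫ ^ 2 := by
    rw [← real_inner_self_eq_norm_sq]
    simp only [hp, inner_sub_left, inner_sub_right, real_inner_smul_left,
      real_inner_smul_right, huu]
    rw [real_inner_comm v u, real_inner_self_eq_norm_sq, hv]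
    ring
  have hqn : ‖q‖ = Real.sqrt (‖c‖ ^ 2 - ⟪c, u⟫ ^ 2) := by
    rw [← hq2]; exact (Real.sqrt_sq (norm_nonneg _)).symm
  have hpn : ‖p‖ = Real.sqrt (1 - ⟪u, v⟫ ^ 2) := by
    rw [← hp2]; exact (Real.sqrt_sq (norm_nonneg _)).symm
  have hqp : |(⟪q, p⟫ : ℝ)| ≤ Real.sqrt (‖c‖ ^ 2 - ⟪c, u⟫ ^ 2) * Real.sqrt (1 - ⟪u, v⟫ ^ 2) := by
    have := abs_real_inner_le_norm q p
    rwa [hqn, hpn] at this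
  have hproj : (⟪c, u⟫ : ℝ) * |(⟪u, v⟫ : ℝ)|
      - Real.sqrt (‖c‖ ^ 2 - ⟪c, u⟫ ^ 2) * Real.sqrt (1 - ⟪u, v⟫ ^ 2) ≤ |(⟪c, v⟫ : ℝ)| := by
    have h5 : (⟪c, u⟫ : ℝ) * |(⟪u, v⟫ : ℝ)| = |(⟪c, u⟫ : ℝ) * ⟪u, v⟫| := by
      rw [abs_mul, abs_of_pos hW]
    have h6 : |(⟪c, u⟫ : ℝ) * ⟪u, v⟫| - |(⟪q, p⟫ : ℝ)| ≤ |(⟪c, v⟫ : ℝ)| := by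
      rw [hdecomp]
      have := abs_add_le ((⟪c, u⟫ : ℝ) * ⟪u, v⟫ + ⟪q, p⟫) (-(⟪q, p⟫ : ℝ))
      simp only [add_neg_cancel_right, abs_neg] at this
      linarith
    linarith
  -- angles
  set dd := ‖c‖ with hdd
  set W : ℝ := ⟪c, u⟫ with hWdef
  set β : ℝ := |(⟪u, v⟫ : ℝ)| with hβ
  have hβ1 : β ≤ 1 := by
    have := abs_real_inner_le_norm u v; rwa [hu, hv, one_mul] at this
  have hβ0 : 0 ≤ β := abs_nonneg _
  set θ := Real.arccos (W / dd) with hθdef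
  have hWdd1 : W / dd ≤ 1 := (div_le_one hd).2 hWd
  have hWdd0 : 0 ≤ W / dd := div_nonneg hW.le hd.le
  have hcθ : Real.cos θ = W / dd := Real.cos_arccos (by linarith) hWdd1
  have hdcθ : dd * Real.cos θ = W := by rw [hcθ]; field_simp
  have hθ0 : 0 ≤ θ := Real.arccos_nonneg _
  have hθ2 : θ ≤ Real.pi / 2 := Real.arccos_le_pi_div_two.2 hWdd0
  have hsθ : dd * Real.sin θ = Real.sqrt (dd ^ 2 - W ^ 2) := by
    rw [hθdef, Real.sin_arccos, ← Real.sqrt_sq hd.le, ← Real.sqrt_mul (by positivity)]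
    congr 1; field_simp; rw [Real.sq_sqrt (sq_nonneg dd)]
  have hcρ : Real.cos (rho u v) = β := by
    rw [rho]; exact Real.cos_arccos (by linarith) hβ1
  have hsρ : Real.sin (rho u v) = Real.sqrt (1 - β ^ 2) := by
    rw [rho]; exact Real.sin_arccos _
  have hβsq : β ^ 2 = (⟪u, v⟫ : ℝ) ^ 2 := sq_abs _
  have hcosadd : dd * Real.cos (θ + rho u v) ≤ |(⟪c, v⟫ : ℝ)| := by
    rw [Real.cos_add]
    have e1 : dd * (Real.cos θ * Real.cos (rho u v) - Real.sin θ * Real.sin (rho u v))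
        = (dd * Real.cos θ) * Real.cos (rho u v) - (dd * Real.sin θ) * Real.sin (rho u v) := by
      ring
    rw [e1, hdcθ, hsθ, hcρ, hsρ, hβsq]
    exact hproj
  set b := max ω |(⟪c, v⟫ : ℝ)| with hb
  have hbW : b ≤ dd * Real.cos θ := by
    rw [hdcθ]
    apply max_le
    · have := hωle u hu; rw [hWu] at this; exact this
    · exact hvb.trans (le_of_lt (by rw [hWu] at hlt; exact hlt))
  have hbc : dd * Real.cos (θ + rho u v) ≤ b := hcosadd.trans (le_max_right _ _)
  have hkey := realKey dd (Metric.diam K) ω θ (rho u v) b hd hδ hω0 (le_max_left _ _)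
    hbW hbc hθ0 hθ2 hrho0
  have hbv : b ≤ widthFn K v := max_le (hωle v hv) hvb
  have : widthFn K u - widthFn K v ≤ dd * Real.cos θ - b := by
    rw [hWu, hdcθ]; linarith
  linarith

theorem width_lipschitz {n : ℕ} (hn : 2 ≤ n) (K : Set (EuclideanSpace ℝ (Fin n)))
    (hKc : IsCompact K) (hKconv : Convex ℝ K) (hKint : (interior K).Nonempty)
    (u v : EuclideanSpace ℝ (Fin n)) (hu : ‖u‖ = 1) (hv : ‖v‖ = 1)
    (huv : u ≠ v) (huv' : u ≠ -v) :
    |widthFn K u - widthFn K v| ≤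
      Real.sqrt ((Metric.diam K) ^ 2 -
        (⨅ w : sphere (0 : EuclideanSpace ℝ (Fin n)) 1, widthFn K w) ^ 2) * rho u v := by
  rw [abs_sub_le_iff]
  constructor
  · exact widthSubLe K hKc hKint u v hu hv
  · have h := widthSubLe K hKc hKint v u hv hu
    have hr : rho v u = rho u v := by rw [rho, rho, real_inner_comm]
    rwa [hr] at h
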